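/- Let i = (i_1, …, i_m) be a word. Consider the set of elements (F^0, …, F^m) of BS^i in which every subspace F^k(a) (for 0 ≤ k ≤ m and 0 ≤ a ≤ n) is a coordinate subspace. Then the map from this set to the set of functions {1, …, m} → {true, false}, sending such a point to the function whose value at k is true if and only if F^k(i_k) = F^{k−1}(i_k), is a bijection. -/

import Mathlib

noncomputable section

/-- The coordinate subspace `span{e₁, …, e_k}` of `ℂⁿ` (standard basis `eᵢ = Pi.single i 1`). -/
def stdSub (n k : ℕ) : Submodule ℂ (Fin n → ℂ) :=
  Submodule.span ℂ {v : Fin n → ℂ | ∃ t : Fin n, (t : ℕ) < k ∧ v = Pi.single t 1}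

/-- A complete flag in `ℂⁿ`: a monotone function `{0,…,n} → Submodule ℂ ℂⁿ`
with `dim F(k) = k`. -/
def IsCompleteFlag (n : ℕ) (F : Fin (n + 1) → Submodule ℂ (Fin n → ℂ)) : Prop :=
  Monotone F ∧ ∀ k : Fin (n + 1), Module.finrank ℂ (F k) = (k : ℕ)

/-- The standard flag `E(k) = span{e₁, …, e_k}`. -/
def stdFlag (n : ℕ) : Fin (n + 1) → Submodule ℂ (Fin n → ℂ) := fun k => stdSub n (k : ℕ)

/-- Magyar's description of the Bott–Samelson set `BS^i` for a word `i = (i_1, …, i_m)`: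
sequences of complete flags `(F^0, …, F^m)` with `F^0 = E` the standard flag, and for each
`1 ≤ k ≤ m`, `F^k(a) = F^{k-1}(a)` for all `a ≠ i_k`.  (The word is indexed so that
`i ⟨k⟩` for `k : Fin m` is the letter `i_{k+1}`.) -/
def InBS (n m : ℕ) (i : Fin m → ℕ)
    (F : Fin (m + 1) → Fin (n + 1) → Submodule ℂ (Fin n → ℂ)) : Prop :=
  (∀ k, IsCompleteFlag n (F k)) ∧ F 0 = stdFlag n ∧
    ∀ k : Fin m, ∀ a : Fin (n + 1), (a : ℕ) ≠ i k → F k.succ a = F k.castSucc a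

/-- A coordinate subspace of `ℂⁿ`: the span of a subset of the standard basis vectors. -/
def IsCoordSub (n : ℕ) (W : Submodule ℂ (Fin n → ℂ)) : Prop :=
  ∃ S : Set (Fin n), W = Submodule.span ℂ ((fun t : Fin n => Pi.single t (1 : ℂ)) '' S)

namespace BSaux
open Submodule

def coordSet (n : ℕ) (S : Set (Fin n)) : Submodule ℂ (Fin n → ℂ) :=
  Submodule.span ℂ ((fun t : Fin n => Pi.single t (1:ℂ)) '' S)

lemma single_mem_coordSet_iff {n : ℕ} (S : Set (Fin n)) (t : Fin n) :
    Pi.single t (1:ℂ) ∈ coordSet n S ↔ t ∈ S := by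
  constructor
  · intro h
    by_contra ht
    have hle : coordSet n S ≤
        LinearMap.ker (LinearMap.proj (R := ℂ) (φ := fun _ : Fin n => ℂ) t) := by
      rw [coordSet, span_le]
      rintro v ⟨s, hs, rfl⟩
      have hne : t ≠ s := fun h' => ht (h' ▸ hs)
      simp [LinearMap.mem_ker, Pi.single_eq_of_ne hne]
    have := hle h
    simp [LinearMap.mem_ker] at this
  · intro h
    exact subset_span ⟨t, h, rfl⟩

lemma coordSet_le_iff {n : ℕ} {S T : Set (Fin n)} :
    coordSet n S ≤ coordSet n T ↔ S ⊆ T := by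
  constructor
  · intro h s hs
    exact (single_mem_coordSet_iff T s).1 (h ((single_mem_coordSet_iff S s).2 hs))
  · intro h
    exact span_mono (Set.image_mono h)

lemma coordSet_inj {n : ℕ} {S T : Set (Fin n)} (h : coordSet n S = coordSet n T) : S = T :=
  Set.Subset.antisymm (coordSet_le_iff.1 h.le) (coordSet_le_iff.1 h.ge)

lemma linearIndependent_single (n : ℕ) :
    LinearIndependent ℂ (fun t : Fin n => Pi.single t (1:ℂ)) := by
  have h : (fun t : Fin n => Pi.single t (1:ℂ)) = ⇑(Pi.basisFun ℂ (Fin n)) := by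
    ext t j; simp
  rw [h]
  exact (Pi.basisFun ℂ (Fin n)).linearIndependent

lemma finrank_coordSet {n : ℕ} (S : Set (Fin n)) :
    Module.finrank ℂ (coordSet n S) = S.ncard := by
  classical
  haveI : Fintype ((fun t : Fin n => Pi.single t (1:ℂ)) '' S) := (Set.toFinite _).fintype
  have hinj : Set.InjOn (fun t : Fin n => Pi.single t (1:ℂ)) S :=
    (linearIndependent_single n).injective.injOn
  have h1 : LinearIndependent ℂ (fun x : S => (Pi.single (x : Fin n) (1:ℂ) : Fin n → ℂ)) :=
    (linearIndependent_single n).comp (Subtype.val : S → Fin n) Subtype.val_injective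
  have hli : LinearIndependent ℂ
      (fun x : ((fun t : Fin n => Pi.single t (1:ℂ)) '' S) => (x : Fin n → ℂ)) :=
    LinearIndepOn.image_of_comp (s := S) (fun t : Fin n => Pi.single t (1:ℂ)) id h1
  rw [coordSet, finrank_span_set_eq_card hli, ← Set.ncard_eq_toFinset_card',
    Set.ncard_image_of_injOn hinj]

lemma coordSet_mono {n : ℕ} {S T : Set (Fin n)} (h : S ⊆ T) : coordSet n S ≤ coordSet n T :=
  span_mono (Set.image_mono h)

lemma ncard_lt_set (n a : ℕ) (h : a ≤ n) : Set.ncard {t : Fin n | (t:ℕ) < a} = a := by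
  have heq : {t : Fin n | (t:ℕ) < a} = Fin.castLE h '' Set.univ := by
    ext u
    simp only [Set.mem_setOf_eq, Set.image_univ, Set.mem_range]
    constructor
    · intro hu; exact ⟨⟨u, hu⟩, rfl⟩
    · rintro ⟨v, rfl⟩; exact v.isLt
  rw [heq, Set.ncard_image_of_injective _ (Fin.castLE_injective h), Set.ncard_univ,
    Nat.card_eq_fintype_card, Fintype.card_fin]

def coordFlag (n : ℕ) (w : Equiv.Perm (Fin n)) : Fin (n+1) → Submodule ℂ (Fin n → ℂ) :=
  fun a => coordSet n (w '' {t : Fin n | (t:ℕ) < (a:ℕ)})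

lemma coordFlag_mk (n : ℕ) (w : Equiv.Perm (Fin n)) (v : ℕ) (hv : v < n + 1) :
    coordFlag n w ⟨v, hv⟩ = coordSet n (w '' {t : Fin n | (t:ℕ) < v}) := rfl

lemma coordFlag_isCompleteFlag (n : ℕ) (w : Equiv.Perm (Fin n)) :
    IsCompleteFlag n (coordFlag n w) := by
  constructor
  · intro a b hab
    exact coordSet_mono (Set.image_mono (fun t ht => lt_of_lt_of_le ht (Fin.le_def.mp hab)))
  · intro k
    rw [coordFlag, finrank_coordSet, Set.ncard_image_of_injective _ w.injective,
      ncard_lt_set n k (by omega)]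

lemma stdFlag_eq_coordFlag (n : ℕ) : stdFlag n = coordFlag n 1 := by
  funext a
  show stdSub n a = coordSet n ((1 : Equiv.Perm (Fin n)) '' _)
  rw [stdSub, coordSet]
  congr 1
  ext v
  simp only [Set.mem_setOf_eq, Set.mem_image, Equiv.Perm.coe_one, id_eq]
  aesop

def swapAt (n j : ℕ) : Equiv.Perm (Fin n) :=
  if h : j + 1 < n then Equiv.swap ⟨j, by omega⟩ ⟨j + 1, h⟩ else 1

lemma swapAt_image_ne {n j a : ℕ} (h : j + 1 < n) (ha : a ≠ j + 1) :
    swapAt n j '' {t : Fin n | (t:ℕ) < a} = {t : Fin n | (t:ℕ) < a} := by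
  rw [swapAt, dif_pos h]
  ext u
  rw [Set.mem_image_equiv, Equiv.symm_swap, Set.mem_setOf_eq, Set.mem_setOf_eq,
    Equiv.swap_apply_def]
  split_ifs with h1 h2 <;> simp_all [Fin.ext_iff] <;> omega

lemma swapAt_image_eq {n j : ℕ} (h : j + 1 < n) :
    swapAt n j '' {t : Fin n | (t:ℕ) < j + 1} =
      insert (⟨j + 1, h⟩ : Fin n) {t : Fin n | (t:ℕ) < j} := by
  rw [swapAt, dif_pos h]
  ext u
  rw [Set.mem_image_equiv, Equiv.symm_swap, Set.mem_insert_iff, Set.mem_setOf_eq,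
    Set.mem_setOf_eq, Equiv.swap_apply_def]
  split_ifs with h1 h2 <;> simp_all [Fin.ext_iff] <;> omega

lemma swap_image_ne' {n I a : ℕ} (hI0 : 1 ≤ I) (hIn : I < n) (ha : a ≠ I) :
    swapAt n (I - 1) '' {t : Fin n | (t:ℕ) < a} = {t : Fin n | (t:ℕ) < a} :=
  swapAt_image_ne (j := I - 1) (by omega) (by omega)

lemma swap_image_eq' {n I : ℕ} (hI0 : 1 ≤ I) (hIn : I < n) :
    swapAt n (I - 1) '' {t : Fin n | (t:ℕ) < I} =
      insert (⟨I, hIn⟩ : Fin n) {t : Fin n | (t:ℕ) < I - 1} := by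
  have h : I - 1 + 1 = I := by omega
  have h2 := swapAt_image_eq (n := n) (j := I - 1) (by omega)
  rw [show ((⟨I - 1 + 1, by omega⟩ : Fin n)) = (⟨I, hIn⟩ : Fin n) from by
    rw [Fin.mk.injEq]; omega] at h2
  rw [show {t : Fin n | (t:ℕ) < I - 1 + 1} = {t : Fin n | (t:ℕ) < I} from by ext u; simp; omega]
    at h2
  exact h2

lemma coordFlag_mul (n : ℕ) (w s : Equiv.Perm (Fin n)) (a : Fin (n+1)) :
    coordFlag n (w * s) a = coordSet n (w '' (s '' {t : Fin n | (t:ℕ) < (a:ℕ)})) := by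
  rw [coordFlag]
  congr 1
  rw [← Set.image_comp, ← Equiv.Perm.coe_mul]

lemma unique_middle {n : ℕ} {S₁ T : Set (Fin n)} {x y : Fin n}
    (hxy : x ≠ y) (hx : x ∉ S₁) (hy : y ∉ S₁)
    (h1 : S₁ ⊆ T) (h2 : T ⊆ insert x (insert y S₁))
    (hcard : T.ncard = S₁.ncard + 1)
    (hne : T ≠ insert x S₁) : T = insert y S₁ := by
  by_cases hxT : x ∈ T <;> by_cases hyT : y ∈ T
  · exfalso
    have hT : T = insert x (insert y S₁) := by
      apply Set.Subset.antisymm h2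
      intro u hu
      rcases hu with rfl | rfl | hu
      · exact hxT
      · exact hyT
      · exact h1 hu
    rw [hT, Set.ncard_insert_of_notMem (by simp [hxy, hx]),
      Set.ncard_insert_of_notMem hy] at hcard
    omega
  · exfalso
    apply hne
    apply Set.Subset.antisymm
    · intro u hu
      rcases h2 hu with rfl | rfl | hu'
      · exact Set.mem_insert _ _
      · exact absurd hu hyT
      · exact Set.mem_insert_of_mem _ hu'
    · intro u hu
      rcases hu with rfl | hu
      · exact hxT
      · exact h1 hu
  · apply Set.Subset.antisymm
    · intro u hu
      rcases h2 hu with rfl | rfl | hu'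
      · exact absurd hu hxT
      · exact Set.mem_insert _ _
      · exact Set.mem_insert_of_mem _ hu'
    · intro u hu
      rcases hu with rfl | hu
      · exact hyT
      · exact h1 hu
  · exfalso
    have hT : T = S₁ := by
      apply Set.Subset.antisymm _ h1
      intro u hu
      rcases h2 hu with rfl | rfl | hu'
      · exact absurd hu hxT
      · exact absurd hu hyT
      · exact hu'
    rw [hT] at hcard
    omega

def extendI (m : ℕ) (i : Fin m → ℕ) : ℕ → ℕ := fun k => if h : k < m then i ⟨k, h⟩ else 1

def extendB (m : ℕ) (b : Fin m → Bool) : ℕ → Bool := fun k => if h : k < m then b ⟨k, h⟩ else true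

def wseq (n : ℕ) (i : ℕ → ℕ) (b : ℕ → Bool) : ℕ → Equiv.Perm (Fin n)
  | 0 => 1
  | k + 1 => if b k = true then wseq n i b k else wseq n i b k * swapAt n (i k - 1)

lemma wseq_succ (n : ℕ) (i : ℕ → ℕ) (b : ℕ → Bool) (k : ℕ) :
    wseq n i b (k + 1) =
      if b k = true then wseq n i b k else wseq n i b k * swapAt n (i k - 1) := rfl

/-- The swapped flag differs from the unswapped at level `I`. -/
lemma coordFlag_swap_ne {n : ℕ} (w : Equiv.Perm (Fin n)) {I : ℕ} (hI0 : 1 ≤ I) (hIn : I < n)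
    (hI : I < n + 1) :
    coordFlag n (w * swapAt n (I - 1)) ⟨I, hI⟩ ≠ coordFlag n w ⟨I, hI⟩ := by
  intro hcontra
  rw [coordFlag_mul, coordFlag_mk] at hcontra
  have hsets := coordSet_inj hcontra
  rw [swap_image_eq' hI0 hIn, Set.image_insert_eq] at hsets
  have hmem : w ⟨I, hIn⟩ ∈ w '' {t : Fin n | (t:ℕ) < I} := by
    rw [← hsets]; exact Set.mem_insert _ _
  rw [w.injective.mem_set_image] at hmem
  simp only [Set.mem_setOf_eq] at hmem
  omega

lemma nat_set_split {n I : ℕ} (hI0 : 1 ≤ I) (hIn : I < n) :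
    {t : Fin n | (t:ℕ) < I + 1} =
      insert (⟨I - 1, by omega⟩ : Fin n) (insert (⟨I, hIn⟩ : Fin n)
        {t : Fin n | (t:ℕ) < I - 1}) := by
  ext u
  simp only [Set.mem_setOf_eq, Set.mem_insert_iff, Fin.ext_iff]
  omega

lemma nat_set_split' {n I : ℕ} (hI0 : 1 ≤ I) (hIn : I < n) :
    {t : Fin n | (t:ℕ) < I} =
      insert (⟨I - 1, by omega⟩ : Fin n) {t : Fin n | (t:ℕ) < I - 1} := by
  ext u
  simp only [Set.mem_setOf_eq, Set.mem_insert_iff, Fin.ext_iff]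
  omega

lemma middle_step {n : ℕ} (w : Equiv.Perm (Fin n)) {I : ℕ} (hI0 : 1 ≤ I) (hIn : I < n)
    (T : Set (Fin n))
    (h1 : coordSet n (w '' {t : Fin n | (t:ℕ) < I - 1}) ≤ coordSet n T)
    (h2 : coordSet n T ≤ coordSet n (w '' {t : Fin n | (t:ℕ) < I + 1}))
    (hcard : Module.finrank ℂ (coordSet n T) = I)
    (hne : coordSet n T ≠ coordSet n (w '' {t : Fin n | (t:ℕ) < I})) :
    coordSet n T = coordSet n (w '' (swapAt n (I - 1) '' {t : Fin n | (t:ℕ) < I})) := by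
  have h1' := coordSet_le_iff.1 h1
  have h2' := coordSet_le_iff.1 h2
  rw [finrank_coordSet] at hcard
  have hsplit : w '' {t : Fin n | (t:ℕ) < I + 1} =
      insert (w ⟨I - 1, by omega⟩) (insert (w ⟨I, hIn⟩)
        (w '' {t : Fin n | (t:ℕ) < I - 1})) := by
    rw [nat_set_split hI0 hIn, Set.image_insert_eq, Set.image_insert_eq]
  have hIset : w '' {t : Fin n | (t:ℕ) < I} =
      insert (w ⟨I - 1, by omega⟩) (w '' {t : Fin n | (t:ℕ) < I - 1}) := by
    rw [nat_set_split' hI0 hIn, Set.image_insert_eq]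
  have hxy : w ⟨I - 1, by omega⟩ ≠ w ⟨I, hIn⟩ := by
    intro hcon
    have := w.injective hcon
    rw [Fin.mk.injEq] at this
    omega
  have hx : w ⟨I - 1, by omega⟩ ∉ w '' {t : Fin n | (t:ℕ) < I - 1} := by
    rw [w.injective.mem_set_image]
    simp
  have hy : w ⟨I, hIn⟩ ∉ w '' {t : Fin n | (t:ℕ) < I - 1} := by
    rw [w.injective.mem_set_image]
    simp
  have hS₁card : (w '' {t : Fin n | (t:ℕ) < I - 1}).ncard = I - 1 := by
    rw [Set.ncard_image_of_injective _ w.injective, ncard_lt_set n _ (by omega)]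
  have hfinal : T = insert (w ⟨I, hIn⟩) (w '' {t : Fin n | (t:ℕ) < I - 1}) :=
    unique_middle hxy hx hy h1' (by rw [← hsplit]; exact h2') (by omega)
      (fun hcon => hne (by rw [hcon, ← hIset]))
  rw [swap_image_eq' hI0 hIn, Set.image_insert_eq, hfinal]

end BSaux

open BSaux

section Main

variable {n m : ℕ}

/-- The flag sequence built from a word and a boolean vector. -/
def buildF (n m : ℕ) (i : Fin m → ℕ) (b : Fin m → Bool) :
    Fin (m + 1) → Fin (n + 1) → Submodule ℂ (Fin n → ℂ) :=
  fun k a => coordFlag n (wseq n (extendI m i) (extendB m b) (k : ℕ)) a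

lemma buildF_mem (hn : 2 ≤ n) (i : Fin m → ℕ) (hi : ∀ t, 1 ≤ i t ∧ i t ≤ n - 1)
    (b : Fin m → Bool) :
    InBS n m i (buildF n m i b) ∧ ∀ k a, IsCoordSub n (buildF n m i b k a) := by
  refine ⟨⟨fun k => coordFlag_isCompleteFlag n _, ?_, ?_⟩, fun k a => ⟨_, rfl⟩⟩
  · funext a
    rw [stdFlag_eq_coordFlag]
    rfl
  · intro k a hka
    show coordFlag n (wseq n (extendI m i) (extendB m b) ((k:ℕ) + 1)) a = _
    rw [wseq_succ]
    by_cases hb : extendB m b (k : ℕ) = true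
    · rw [if_pos hb]; rfl
    · rw [if_neg hb]
      have hik : extendI m i (k : ℕ) = i k := by rw [extendI, dif_pos k.isLt]
      rw [hik, coordFlag_mul, swap_image_ne' (hi k).1 (by have := (hi k).2; omega) hka]
      rfl

lemma buildF_bool (hn : 2 ≤ n) (i : Fin m → ℕ) (hi : ∀ t, 1 ≤ i t ∧ i t ≤ n - 1)
    (b : Fin m → Bool) (k : Fin m) (h : (i k : ℕ) < n + 1) :
    (buildF n m i b k.succ ⟨i k, h⟩ = buildF n m i b k.castSucc ⟨i k, h⟩) ↔ b k = true := by
  have hik : extendI m i (k : ℕ) = i k := by rw [extendI, dif_pos k.isLt]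
  have hbk : extendB m b (k : ℕ) = b k := by rw [extendB, dif_pos k.isLt]
  show (coordFlag n (wseq n (extendI m i) (extendB m b) ((k:ℕ) + 1)) _ =
    coordFlag n (wseq n (extendI m i) (extendB m b) (k:ℕ)) _) ↔ _
  rw [wseq_succ, hbk, hik]
  by_cases hb : b k = true
  · simp [hb]
  · rw [if_neg hb]
    have hne := coordFlag_swap_ne (wseq n (extendI m i) (extendB m b) (k : ℕ))
      (hi k).1 (by have := (hi k).2; omega) h
    simp only [Bool.not_eq_true] at hb
    rw [hb]
    simp [hne]

set_option maxHeartbeats 1000000 in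
lemma key_lemma (hn : 2 ≤ n) (i : Fin m → ℕ) (hi : ∀ t, 1 ≤ i t ∧ i t ≤ n - 1)
    (F : Fin (m + 1) → Fin (n + 1) → Submodule ℂ (Fin n → ℂ))
    (hF : InBS n m i F) (hC : ∀ k a, IsCoordSub n (F k a))
    (b : Fin m → Bool)
    (hb : ∀ (k : Fin m) (h : (i k : ℕ) < n + 1),
      (F k.succ ⟨i k, h⟩ = F k.castSucc ⟨i k, h⟩) ↔ b k = true) :
    F = buildF n m i b := by
  obtain ⟨hflag, h0, hoff⟩ := hF
  suffices H : ∀ (k : ℕ) (hk : k ≤ m), F ⟨k, by omega⟩ = buildF n m i b ⟨k, by omega⟩ by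
    funext k
    have := H (k : ℕ) (by omega)
    rwa [show (⟨(k:ℕ), by omega⟩ : Fin (m+1)) = k from Fin.ext rfl] at this
  intro k
  induction k with
  | zero =>
    intro _
    rw [show (⟨0, by omega⟩ : Fin (m+1)) = 0 from rfl, h0, stdFlag_eq_coordFlag]
    rfl
  | succ k IH =>
    intro hk1
    have hk : k ≤ m := by omega
    have IH' := IH hk
    set kk : Fin m := ⟨k, by omega⟩ with hkk
    have hsucc : (⟨k + 1, by omega⟩ : Fin (m+1)) = kk.succ := Fin.ext rfl
    have hcast : (⟨k, by omega⟩ : Fin (m+1)) = kk.castSucc := Fin.ext rfl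
    set w := wseq n (extendI m i) (extendB m b) k with hw
    have hik : extendI m i k = i kk := by rw [extendI, dif_pos (show k < m by omega)]
    have hbk : extendB m b k = b kk := by rw [extendB, dif_pos (show k < m by omega)]
    have hI0 : 1 ≤ i kk := (hi kk).1
    have hIn : i kk < n := by have := (hi kk).2; omega
    have hbuild_succ : ∀ a, buildF n m i b ⟨k + 1, by omega⟩ a =
        coordFlag n (if b kk = true then w else w * swapAt n (i kk - 1)) a := by
      intro a
      show coordFlag n (wseq n (extendI m i) (extendB m b) (k + 1)) a = _
      rw [wseq_succ, hbk, hik]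
    have hIH_a : ∀ a, F ⟨k, by omega⟩ a = coordFlag n w a := fun a => congrFun IH' a
    funext a
    rw [hbuild_succ a]
    by_cases hav : (a : ℕ) = i kk
    · -- at the letter
      have ha' : a = ⟨i kk, Nat.lt_succ_of_lt hIn⟩ := Fin.ext hav
      subst ha'
      by_cases hbool : b kk = true
      · rw [if_pos hbool]
        have heq := (hb kk (by omega)).2 hbool
        rw [hsucc, heq, ← hcast, hIH_a]
      · rw [if_neg hbool]
        have hneq : ¬(F kk.succ ⟨i kk, Nat.lt_succ_of_lt hIn⟩ =
            F kk.castSucc ⟨i kk, Nat.lt_succ_of_lt hIn⟩) := by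
          intro hcontra
          exact hbool ((hb kk (Nat.lt_succ_of_lt hIn)).1 hcontra)
        obtain ⟨T, hT0⟩ := hC ⟨k + 1, by omega⟩ ⟨i kk, Nat.lt_succ_of_lt hIn⟩
        have hT : F ⟨k + 1, by omega⟩ ⟨i kk, Nat.lt_succ_of_lt hIn⟩ = coordSet n T := hT0
        have hlo : F ⟨k + 1, by omega⟩ ⟨i kk - 1, by omega⟩ =
            coordSet n (w '' {t : Fin n | (t:ℕ) < i kk - 1}) := by
          rw [hsucc, hoff kk ⟨i kk - 1, by omega⟩ (by show i kk - 1 ≠ i kk; omega),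
            ← hcast, hIH_a]
          rfl
        have hhi : F ⟨k + 1, by omega⟩ ⟨i kk + 1, by omega⟩ =
            coordSet n (w '' {t : Fin n | (t:ℕ) < i kk + 1}) := by
          rw [hsucc, hoff kk ⟨i kk + 1, by omega⟩ (by show i kk + 1 ≠ i kk; omega),
            ← hcast, hIH_a]
          rfl
        have hmono := (hflag ⟨k + 1, by omega⟩).1
        have h1 : coordSet n (w '' {t : Fin n | (t:ℕ) < i kk - 1}) ≤ coordSet n T := by
          rw [← hlo, ← hT]
          exact hmono (by rw [Fin.mk_le_mk]; omega)
        have h2 : coordSet n T ≤ coordSet n (w '' {t : Fin n | (t:ℕ) < i kk + 1}) := by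
          rw [← hhi, ← hT]
          exact hmono (by rw [Fin.mk_le_mk]; omega)
        have hcard : Module.finrank ℂ (coordSet n T) = i kk := by
          rw [← hT]
          exact (hflag ⟨k + 1, by omega⟩).2 ⟨i kk, Nat.lt_succ_of_lt hIn⟩
        have hne : coordSet n T ≠ coordSet n (w '' {t : Fin n | (t:ℕ) < i kk}) := by
          intro hcon
          apply hneq
          show F ⟨k + 1, by omega⟩ _ = F ⟨k, by omega⟩ _
          rw [hT, hcon, hIH_a]
          rfl
        have hres := middle_step w hI0 hIn T h1 h2 hcard hne
        rw [hT, hres, coordFlag_mul]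
    · -- off the letter
      have hoff' : F ⟨k + 1, by omega⟩ a = F ⟨k, by omega⟩ a := by
        rw [hsucc, hcast]
        exact hoff kk a hav
      rw [hoff', hIH_a]
      by_cases hbool : b kk = true
      · rw [if_pos hbool]
      · rw [if_neg hbool]
        rw [coordFlag_mul, swap_image_ne' hI0 hIn hav]
        rfl

end Main

/-- on the set of points of `BS^i` all of whose subspaces are coordinate
subspaces, the map sending such a point to the boolean function
`k ↦ (F^k(i_k) = F^{k-1}(i_k))` is a bijection onto all functions `{1,…,m} → Bool`. -/
theorem stmt2 (n m : ℕ) (hn : 2 ≤ n) (i : Fin m → ℕ)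
    (hi : ∀ t, 1 ≤ i t ∧ i t ≤ n - 1) :
    Set.BijOn
      (fun (F : Fin (m + 1) → Fin (n + 1) → Submodule ℂ (Fin n → ℂ)) (k : Fin m) =>
        @decide
          (F k.succ ⟨i k, by have := (hi k).2; omega⟩ =
            F k.castSucc ⟨i k, by have := (hi k).2; omega⟩)
          (Classical.propDecidable _))
      {F | InBS n m i F ∧ ∀ k a, IsCoordSub n (F k a)}
      (Set.univ : Set (Fin m → Bool)) := by
  classical
  refine ⟨fun F _ => Set.mem_univ _, ?_, ?_⟩
  · -- InjOn
    intro F hF G hG hfg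
    simp only [Set.mem_setOf_eq] at hF hG
    have hFb : F = buildF n m i (fun k =>
        @decide (F k.succ ⟨i k, by have := (hi k).2; omega⟩ =
          F k.castSucc ⟨i k, by have := (hi k).2; omega⟩) (Classical.propDecidable _)) := by
      apply key_lemma hn i hi F hF.1 hF.2
      intro k h
      simp only [decide_eq_true_eq]
    have hGb : G = buildF n m i (fun k =>
        @decide (G k.succ ⟨i k, by have := (hi k).2; omega⟩ =
          G k.castSucc ⟨i k, by have := (hi k).2; omega⟩) (Classical.propDecidable _)) := by
      apply key_lemma hn i hi G hG.1 hG.2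
      intro k h
      simp only [decide_eq_true_eq]
    have hfg' : (fun k : Fin m =>
        @decide (F k.succ ⟨i k, by have := (hi k).2; omega⟩ =
          F k.castSucc ⟨i k, by have := (hi k).2; omega⟩) (Classical.propDecidable _)) =
        (fun k : Fin m =>
        @decide (G k.succ ⟨i k, by have := (hi k).2; omega⟩ =
          G k.castSucc ⟨i k, by have := (hi k).2; omega⟩) (Classical.propDecidable _)) := hfg
    rw [hfg'] at hFb
    exact hFb.trans hGb.symm
  · -- SurjOn
    intro b _
    refine ⟨buildF n m i b, buildF_mem hn i hi b, ?_⟩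
    funext k
    have hiff := buildF_bool hn i hi b k (by have := (hi k).2; omega)
    by_cases hbk : b k = true
    · simp only [hbk]
      exact decide_eq_true (hiff.2 hbk)
    · simp only [Bool.not_eq_true] at hbk
      rw [hbk]
      exact decide_eq_false (fun hcon => by simp [hiff.1 hcon] at hbk)
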